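/- Every vertex of the polytope B^T = {(u_{t−1}, u_t, u_{t+1}, s_t, s_{t+1}, J) ∈ [0,1]^6 : J ≥ s_t + s_{t+1} − u_{t+1}, J ≤ s_t, s_t ≤ u_t, s_t ≤ 1 − u_{t−1}, s_{t+1} ≤ u_{t+1}, s_{t+1} ≤ 1 − u_t} has all integer (0/1) coordinates; equivalently, B^T is an integral polytope. -/

import Mathlib

/-- The polytope `B^T` in variables (u_{t-1}, u_t, u_{t+1}, s_t, s_{t+1}, J),
indexed as x 0, ..., x 5. -/
def polytopeBT : Set (Fin 6 → ℝ) :=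
  {x | (∀ i, 0 ≤ x i ∧ x i ≤ 1) ∧
    x 5 ≥ x 3 + x 4 - x 2 ∧
    x 5 ≤ x 3 ∧
    x 3 ≤ x 1 ∧
    x 3 ≤ 1 - x 0 ∧
    x 4 ≤ x 2 ∧
    x 4 ≤ 1 - x 1}

lemma mem_mk (a b c s t J : ℝ)
    (ha0 : 0 ≤ a) (ha1 : a ≤ 1) (hb0 : 0 ≤ b) (hb1 : b ≤ 1)
    (hc0 : 0 ≤ c) (hc1 : c ≤ 1) (hs0 : 0 ≤ s) (hs1 : s ≤ 1)
    (ht0 : 0 ≤ t) (ht1 : t ≤ 1) (hJ0 : 0 ≤ J) (hJ1 : J ≤ 1)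
    (g1 : s + t - c ≤ J) (g2 : J ≤ s) (g3 : s ≤ b) (g4 : s ≤ 1 - a)
    (g5 : t ≤ c) (g6 : t ≤ 1 - b) :
    ![a,b,c,s,t,J] ∈ polytopeBT := by
  refine ⟨fun i => ?_, ?_, ?_, ?_, ?_, ?_, ?_⟩
  · fin_cases i <;> exact ⟨by assumption, by assumption⟩
  · show J ≥ s + t - c; linarith
  · show J ≤ s; linarith
  · show s ≤ b; linarith
  · show s ≤ 1 - a; linarith
  · show t ≤ c; linarith
  · show t ≤ 1 - b; linarith


lemma v60 (a b c d e f : ℝ) : ![a,b,c,d,e,f] 0 = a := rfl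
lemma v61 (a b c d e f : ℝ) : ![a,b,c,d,e,f] 1 = b := rfl
lemma v62 (a b c d e f : ℝ) : ![a,b,c,d,e,f] 2 = c := rfl
lemma v63 (a b c d e f : ℝ) : ![a,b,c,d,e,f] 3 = d := rfl
lemma v64 (a b c d e f : ℝ) : ![a,b,c,d,e,f] 4 = e := rfl
lemma v65 (a b c d e f : ℝ) : ![a,b,c,d,e,f] 5 = f := rfl

lemma bound_aux {xi di δ ε m : ℝ} (hx0 : 0 ≤ xi) (hx1 : xi ≤ 1)
    (hd1 : -1 ≤ di) (hd2 : di ≤ 1) (hδ1 : -ε ≤ δ) (hδ2 : δ ≤ ε) (hεm : ε ≤ m)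
    (hT : m ≤ if di = 0 then 1 else min xi (1 - xi)) :
    0 ≤ xi + δ * di ∧ xi + δ * di ≤ 1 := by
  by_cases h : di = 0
  · rw [h]
    constructor <;> · rw [mul_zero]; linarith
  · rw [if_neg h] at hT
    have h1 : m ≤ xi := hT.trans (min_le_left _ _)
    have h2 : m ≤ 1 - xi := hT.trans (min_le_right _ _)
    have k1 : (0:ℝ) ≤ (ε - δ) * (1 + di) := mul_nonneg (by linarith) (by linarith)
    have k2 : (0:ℝ) ≤ (ε + δ) * (1 - di) := mul_nonneg (by linarith) (by linarith)
    have k3 : (0:ℝ) ≤ (ε - δ) * (1 - di) := mul_nonneg (by linarith) (by linarith)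
    have k4 : (0:ℝ) ≤ (ε + δ) * (1 + di) := mul_nonneg (by linarith) (by linarith)
    constructor <;> nlinarith

lemma row_aux {v cmb δ ε m : ℝ} (hv : v ≤ 0) (hc1 : -4 ≤ cmb) (hc2 : cmb ≤ 4)
    (hδ1 : -ε ≤ δ) (hδ2 : δ ≤ ε) (h4 : 4 * ε ≤ m)
    (hU : m ≤ if cmb = 0 then 1 else -v) :
    v + δ * cmb ≤ 0 := by
  by_cases h : cmb = 0
  · rw [h, mul_zero]; linarith
  · rw [if_neg h] at hU
    have k1 : (0:ℝ) ≤ (ε - δ) * (4 + cmb) := mul_nonneg (by linarith) (by linarith)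
    have k2 : (0:ℝ) ≤ (ε + δ) * (4 - cmb) := mul_nonneg (by linarith) (by linarith)
    nlinarith

set_option maxHeartbeats 1000000 in
open Classical in
lemma not_extreme_strong (x : Fin 6 → ℝ) (hx : x ∈ polytopeBT)
    (d0 d1 d2 d3 d4 d5 : ℝ)
    (e0 : -1 ≤ d0 ∧ d0 ≤ 1) (e1 : -1 ≤ d1 ∧ d1 ≤ 1) (e2 : -1 ≤ d2 ∧ d2 ≤ 1)
    (e3 : -1 ≤ d3 ∧ d3 ≤ 1) (e4 : -1 ≤ d4 ∧ d4 ≤ 1) (e5 : -1 ≤ d5 ∧ d5 ≤ 1)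
    (hnz : d0 ≠ 0 ∨ d1 ≠ 0 ∨ d2 ≠ 0 ∨ d3 ≠ 0 ∨ d4 ≠ 0 ∨ d5 ≠ 0)
    (f0 : d0 ≠ 0 → 0 < x 0 ∧ x 0 < 1) (f1 : d1 ≠ 0 → 0 < x 1 ∧ x 1 < 1)
    (f2 : d2 ≠ 0 → 0 < x 2 ∧ x 2 < 1) (f3 : d3 ≠ 0 → 0 < x 3 ∧ x 3 < 1)
    (f4 : d4 ≠ 0 → 0 < x 4 ∧ x 4 < 1) (f5 : d5 ≠ 0 → 0 < x 5 ∧ x 5 < 1)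
    (hq1 : d3 + d4 - d2 - d5 = 0 ∨ x 3 + x 4 - x 2 < x 5)
    (hq2 : d5 - d3 = 0 ∨ x 5 < x 3)
    (hq3 : d3 - d1 = 0 ∨ x 3 < x 1)
    (hq4 : d0 + d3 = 0 ∨ x 0 + x 3 < 1)
    (hq5 : d4 - d2 = 0 ∨ x 4 < x 2)
    (hq6 : d1 + d4 = 0 ∨ x 1 + x 4 < 1) :
    x ∉ Set.extremePoints ℝ polytopeBT := by
  obtain ⟨B, g1, g2, g3, g4, g5, g6⟩ := hx
  obtain ⟨T0, hT0def⟩ : ∃ y : ℝ, y = if d0 = 0 then 1 else min (x 0) (1 - x 0) := ⟨_, rfl⟩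
  obtain ⟨T1, hT1def⟩ : ∃ y : ℝ, y = if d1 = 0 then 1 else min (x 1) (1 - x 1) := ⟨_, rfl⟩
  obtain ⟨T2, hT2def⟩ : ∃ y : ℝ, y = if d2 = 0 then 1 else min (x 2) (1 - x 2) := ⟨_, rfl⟩
  obtain ⟨T3, hT3def⟩ : ∃ y : ℝ, y = if d3 = 0 then 1 else min (x 3) (1 - x 3) := ⟨_, rfl⟩
  obtain ⟨T4, hT4def⟩ : ∃ y : ℝ, y = if d4 = 0 then 1 else min (x 4) (1 - x 4) := ⟨_, rfl⟩
  obtain ⟨T5, hT5def⟩ : ∃ y : ℝ, y = if d5 = 0 then 1 else min (x 5) (1 - x 5) := ⟨_, rfl⟩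
  obtain ⟨U1, hU1def⟩ : ∃ y : ℝ, y = if d3 + d4 - d2 - d5 = 0 then 1 else -(x 3 + x 4 - x 2 - x 5) := ⟨_, rfl⟩
  obtain ⟨U2, hU2def⟩ : ∃ y : ℝ, y = if d5 - d3 = 0 then 1 else -(x 5 - x 3) := ⟨_, rfl⟩
  obtain ⟨U3, hU3def⟩ : ∃ y : ℝ, y = if d3 - d1 = 0 then 1 else -(x 3 - x 1) := ⟨_, rfl⟩
  obtain ⟨U4, hU4def⟩ : ∃ y : ℝ, y = if d0 + d3 = 0 then 1 else -(x 0 + x 3 - 1) := ⟨_, rfl⟩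
  obtain ⟨U5, hU5def⟩ : ∃ y : ℝ, y = if d4 - d2 = 0 then 1 else -(x 4 - x 2) := ⟨_, rfl⟩
  obtain ⟨U6, hU6def⟩ : ∃ y : ℝ, y = if d1 + d4 = 0 then 1 else -(x 1 + x 4 - 1) := ⟨_, rfl⟩
  have hP0 : 0 < T0 := by
    rw [hT0def]; split_ifs with h
    · norm_num
    · exact lt_min (f0 h).1 (by linarith [(f0 h).2])
  have hP1 : 0 < T1 := by
    rw [hT1def]; split_ifs with h
    · norm_num
    · exact lt_min (f1 h).1 (by linarith [(f1 h).2])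
  have hP2 : 0 < T2 := by
    rw [hT2def]; split_ifs with h
    · norm_num
    · exact lt_min (f2 h).1 (by linarith [(f2 h).2])
  have hP3 : 0 < T3 := by
    rw [hT3def]; split_ifs with h
    · norm_num
    · exact lt_min (f3 h).1 (by linarith [(f3 h).2])
  have hP4 : 0 < T4 := by
    rw [hT4def]; split_ifs with h
    · norm_num
    · exact lt_min (f4 h).1 (by linarith [(f4 h).2])
  have hP5 : 0 < T5 := by
    rw [hT5def]; split_ifs with h
    · norm_num
    · exact lt_min (f5 h).1 (by linarith [(f5 h).2])
  have hQ1 : 0 < U1 := by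
    rw [hU1def]; split_ifs with h
    · norm_num
    · rcases hq1 with h' | h'
      · exact absurd h' h
      · linarith
  have hQ2 : 0 < U2 := by
    rw [hU2def]; split_ifs with h
    · norm_num
    · rcases hq2 with h' | h'
      · exact absurd h' h
      · linarith
  have hQ3 : 0 < U3 := by
    rw [hU3def]; split_ifs with h
    · norm_num
    · rcases hq3 with h' | h'
      · exact absurd h' h
      · linarith
  have hQ4 : 0 < U4 := by
    rw [hU4def]; split_ifs with h
    · norm_num
    · rcases hq4 with h' | h'
      · exact absurd h' h
      · linarith
  have hQ5 : 0 < U5 := by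
    rw [hU5def]; split_ifs with h
    · norm_num
    · rcases hq5 with h' | h'
      · exact absurd h' h
      · linarith
  have hQ6 : 0 < U6 := by
    rw [hU6def]; split_ifs with h
    · norm_num
    · rcases hq6 with h' | h'
      · exact absurd h' h
      · linarith
  obtain ⟨m, hmdef⟩ : ∃ y : ℝ, y = min T0 (min T1 (min T2 (min T3 (min T4 (min T5
      (min U1 (min U2 (min U3 (min U4 (min U5 U6)))))))))) := ⟨_, rfl⟩
  have hm : 0 < m := by
    rw [hmdef]
    refine lt_min hP0 (lt_min hP1 (lt_min hP2 (lt_min hP3 (lt_min hP4 (lt_min hP5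
      (lt_min hQ1 (lt_min hQ2 (lt_min hQ3 (lt_min hQ4 (lt_min hQ5 hQ6))))))))))
  have hmT0 : m ≤ T0 := by rw [hmdef]; exact min_le_left _ _
  have hrest1 : m ≤ min T1 (min T2 (min T3 (min T4 (min T5 (min U1 (min U2 (min U3 (min U4 (min U5 U6))))))))) := by rw [hmdef]; exact min_le_right _ _
  have hmT1 : m ≤ T1 := hrest1.trans (min_le_left _ _)
  have hrest2 := hrest1.trans (min_le_right _ _)
  have hmT2 : m ≤ T2 := hrest2.trans (min_le_left _ _)
  have hrest3 := hrest2.trans (min_le_right _ _)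
  have hmT3 : m ≤ T3 := hrest3.trans (min_le_left _ _)
  have hrest4 := hrest3.trans (min_le_right _ _)
  have hmT4 : m ≤ T4 := hrest4.trans (min_le_left _ _)
  have hrest5 := hrest4.trans (min_le_right _ _)
  have hmT5 : m ≤ T5 := hrest5.trans (min_le_left _ _)
  have hrest6 := hrest5.trans (min_le_right _ _)
  have hmU1 : m ≤ U1 := hrest6.trans (min_le_left _ _)
  have hrest7 := hrest6.trans (min_le_right _ _)
  have hmU2 : m ≤ U2 := hrest7.trans (min_le_left _ _)
  have hrest8 := hrest7.trans (min_le_right _ _)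
  have hmU3 : m ≤ U3 := hrest8.trans (min_le_left _ _)
  have hrest9 := hrest8.trans (min_le_right _ _)
  have hmU4 : m ≤ U4 := hrest9.trans (min_le_left _ _)
  have hrest10 := hrest9.trans (min_le_right _ _)
  have hmU5 : m ≤ U5 := hrest10.trans (min_le_left _ _)
  have hmU6 : m ≤ U6 := hrest10.trans (min_le_right _ _)
  have hmT0' : m ≤ if d0 = 0 then 1 else min (x 0) (1 - x 0) := hT0def ▸ hmT0
  have hmT1' : m ≤ if d1 = 0 then 1 else min (x 1) (1 - x 1) := hT1def ▸ hmT1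
  have hmT2' : m ≤ if d2 = 0 then 1 else min (x 2) (1 - x 2) := hT2def ▸ hmT2
  have hmT3' : m ≤ if d3 = 0 then 1 else min (x 3) (1 - x 3) := hT3def ▸ hmT3
  have hmT4' : m ≤ if d4 = 0 then 1 else min (x 4) (1 - x 4) := hT4def ▸ hmT4
  have hmT5' : m ≤ if d5 = 0 then 1 else min (x 5) (1 - x 5) := hT5def ▸ hmT5
  have hmU1' : m ≤ if d3 + d4 - d2 - d5 = 0 then 1 else -(x 3 + x 4 - x 2 - x 5) := hU1def ▸ hmU1
  have hmU2' : m ≤ if d5 - d3 = 0 then 1 else -(x 5 - x 3) := hU2def ▸ hmU2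
  have hmU3' : m ≤ if d3 - d1 = 0 then 1 else -(x 3 - x 1) := hU3def ▸ hmU3
  have hmU4' : m ≤ if d0 + d3 = 0 then 1 else -(x 0 + x 3 - 1) := hU4def ▸ hmU4
  have hmU5' : m ≤ if d4 - d2 = 0 then 1 else -(x 4 - x 2) := hU5def ▸ hmU5
  have hmU6' : m ≤ if d1 + d4 = 0 then 1 else -(x 1 + x 4 - 1) := hU6def ▸ hmU6
  obtain ⟨ε, hεdef⟩ : ∃ y : ℝ, y = m / 4 := ⟨_, rfl⟩
  have hε : 0 < ε := by rw [hεdef]; positivity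
  have hεm : ε ≤ m := by rw [hεdef]; linarith
  have h4ε : 4 * ε ≤ m := by rw [hεdef]; linarith
  have key : ∀ δ : ℝ, -ε ≤ δ → δ ≤ ε →
      ![x 0 + δ * d0, x 1 + δ * d1, x 2 + δ * d2, x 3 + δ * d3,
        x 4 + δ * d4, x 5 + δ * d5] ∈ polytopeBT := by
    intro δ hδ1 hδ2
    have b0 := bound_aux (B 0).1 (B 0).2 e0.1 e0.2 hδ1 hδ2 hεm hmT0'
    have b1 := bound_aux (B 1).1 (B 1).2 e1.1 e1.2 hδ1 hδ2 hεm hmT1'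
    have b2 := bound_aux (B 2).1 (B 2).2 e2.1 e2.2 hδ1 hδ2 hεm hmT2'
    have b3 := bound_aux (B 3).1 (B 3).2 e3.1 e3.2 hδ1 hδ2 hεm hmT3'
    have b4 := bound_aux (B 4).1 (B 4).2 e4.1 e4.2 hδ1 hδ2 hεm hmT4'
    have b5 := bound_aux (B 5).1 (B 5).2 e5.1 e5.2 hδ1 hδ2 hεm hmT5'
    have r1 : (x 3 + x 4 - x 2 - x 5) + δ * (d3 + d4 - d2 - d5) ≤ 0 :=
      row_aux (by linarith) (by linarith [e2.1, e2.2, e3.1, e3.2, e4.1, e4.2, e5.1, e5.2])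
        (by linarith [e2.1, e2.2, e3.1, e3.2, e4.1, e4.2, e5.1, e5.2]) hδ1 hδ2 h4ε hmU1'
    have r2 : (x 5 - x 3) + δ * (d5 - d3) ≤ 0 :=
      row_aux (by linarith) (by linarith [e3.1, e3.2, e5.1, e5.2])
        (by linarith [e3.1, e3.2, e5.1, e5.2]) hδ1 hδ2 h4ε hmU2'
    have r3 : (x 3 - x 1) + δ * (d3 - d1) ≤ 0 :=
      row_aux (by linarith) (by linarith [e1.1, e1.2, e3.1, e3.2])
        (by linarith [e1.1, e1.2, e3.1, e3.2]) hδ1 hδ2 h4ε hmU3'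
    have r4 : (x 0 + x 3 - 1) + δ * (d0 + d3) ≤ 0 :=
      row_aux (by linarith) (by linarith [e0.1, e0.2, e3.1, e3.2])
        (by linarith [e0.1, e0.2, e3.1, e3.2]) hδ1 hδ2 h4ε hmU4'
    have r5 : (x 4 - x 2) + δ * (d4 - d2) ≤ 0 :=
      row_aux (by linarith) (by linarith [e2.1, e2.2, e4.1, e4.2])
        (by linarith [e2.1, e2.2, e4.1, e4.2]) hδ1 hδ2 h4ε hmU5'
    have r6 : (x 1 + x 4 - 1) + δ * (d1 + d4) ≤ 0 :=
      row_aux (by linarith) (by linarith [e1.1, e1.2, e4.1, e4.2])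
        (by linarith [e1.1, e1.2, e4.1, e4.2]) hδ1 hδ2 h4ε hmU6'
    exact mem_mk _ _ _ _ _ _ b0.1 b0.2 b1.1 b1.2 b2.1 b2.2 b3.1 b3.2 b4.1 b4.2 b5.1 b5.2
      (by linarith [r1]) (by linarith [r2]) (by linarith [r3]) (by linarith [r4])
      (by linarith [r5]) (by linarith [r6])
  intro hext
  have hy := key ε (by linarith) le_rfl
  have hz := key (-ε) le_rfl (by linarith)
  have hseg : x ∈ openSegment ℝ
      (![x 0 + ε * d0, x 1 + ε * d1, x 2 + ε * d2, x 3 + ε * d3, x 4 + ε * d4, x 5 + ε * d5])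
      (![x 0 + (-ε) * d0, x 1 + (-ε) * d1, x 2 + (-ε) * d2, x 3 + (-ε) * d3,
        x 4 + (-ε) * d4, x 5 + (-ε) * d5]) := by
    refine ⟨1/2, 1/2, by norm_num, by norm_num, by norm_num, ?_⟩
    funext i
    fin_cases i <;> · simp [Pi.add_apply, Pi.smul_apply, smul_eq_mul, v60, v61, v62, v63, v64, v65]; ring
  have hy' := hext.2 hy hz hseg
  rcases hnz with h | h | h | h | h | h
  · have h' := congrFun hy' 0
    rw [v60] at h'
    have hz' : ε * d0 = 0 := by linarith
    rcases mul_eq_zero.mp hz' with h'' | h''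
    · exact absurd h'' (ne_of_gt hε)
    · exact h h''
  · have h' := congrFun hy' 1
    rw [v61] at h'
    have hz' : ε * d1 = 0 := by linarith
    rcases mul_eq_zero.mp hz' with h'' | h''
    · exact absurd h'' (ne_of_gt hε)
    · exact h h''
  · have h' := congrFun hy' 2
    rw [v62] at h'
    have hz' : ε * d2 = 0 := by linarith
    rcases mul_eq_zero.mp hz' with h'' | h''
    · exact absurd h'' (ne_of_gt hε)
    · exact h h''
  · have h' := congrFun hy' 3
    rw [v63] at h'
    have hz' : ε * d3 = 0 := by linarith
    rcases mul_eq_zero.mp hz' with h'' | h''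
    · exact absurd h'' (ne_of_gt hε)
    · exact h h''
  · have h' := congrFun hy' 4
    rw [v64] at h'
    have hz' : ε * d4 = 0 := by linarith
    rcases mul_eq_zero.mp hz' with h'' | h''
    · exact absurd h'' (ne_of_gt hε)
    · exact h h''
  · have h' := congrFun hy' 5
    rw [v65] at h'
    have hz' : ε * d5 = 0 := by linarith
    rcases mul_eq_zero.mp hz' with h'' | h''
    · exact absurd h'' (ne_of_gt hε)
    · exact h h''
open Classical in
lemma s_int (x : Fin 6 → ℝ) (hx : x ∈ Set.extremePoints ℝ polytopeBT) : x 3 = 0 ∨ x 3 = 1 := by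
  by_contra hne
  push_neg at hne
  obtain ⟨hne0, hne1⟩ := hne
  have hxP := hx.1
  obtain ⟨B, g1, g2, g3, g4, g5, g6⟩ := hxP
  have hxP := hx.1
  have h30 : 0 < x 3 := lt_of_le_of_ne (B 3).1 (Ne.symm hne0)
  have h31 : x 3 < 1 := lt_of_le_of_ne (B 3).2 hne1
  by_cases r : x 3 + x 4 - x 2 = x 5
  · by_cases e1 : x 5 = x 3
    · -- S-II-A : R1 and R2 tight; then x 4 = x 2
      have htc : x 4 = x 2 := by linarith
      refine not_extreme_strong x hxP
        (if x 0 + x 3 = 1 then 1 else 0)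
        (if x 3 = x 1 then -1 else 0)
        (if x 3 = x 1 ∧ x 1 + x 4 = 1 then 1 else 0)
        (-1)
        (if x 3 = x 1 ∧ x 1 + x 4 = 1 then 1 else 0)
        (-1)
        ?_ ?_ ?_ ?_ ?_ ?_ ?_ ?_ ?_ ?_ ?_ ?_ ?_ ?_ ?_ ?_ ?_ ?_ ?_ hx
      · constructor <;> split_ifs <;> norm_num
      · constructor <;> split_ifs <;> norm_num
      · constructor <;> split_ifs <;> norm_num
      · norm_num
      · constructor <;> split_ifs <;> norm_num
      · norm_num
      · exact Or.inr (Or.inr (Or.inr (Or.inl (by norm_num))))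
      · intro h
        by_cases hc : x 0 + x 3 = 1
        · constructor <;> linarith
        · rw [if_neg hc] at h; exact absurd rfl h
      · intro h
        by_cases hc : x 3 = x 1
        · constructor <;> linarith
        · rw [if_neg hc] at h; exact absurd rfl h
      · intro h
        by_cases hc : x 3 = x 1 ∧ x 1 + x 4 = 1
        · obtain ⟨hca, hcb⟩ := hc; constructor <;> linarith
        · rw [if_neg hc] at h; exact absurd rfl h
      · intro _; exact ⟨h30, h31⟩
      · intro h
        by_cases hc : x 3 = x 1 ∧ x 1 + x 4 = 1
        · obtain ⟨hca, hcb⟩ := hc; constructor <;> linarith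
        · rw [if_neg hc] at h; exact absurd rfl h
      · intro _; constructor <;> linarith
      · left; by_cases hc : x 3 = x 1 ∧ x 1 + x 4 = 1 <;> simp [hc] <;> ring
      · left; norm_num
      · by_cases hc : x 3 = x 1
        · left; rw [if_pos hc]; ring
        · right; exact lt_of_le_of_ne g3 hc
      · by_cases hc : x 0 + x 3 = 1
        · left; rw [if_pos hc]; ring
        · right; exact lt_of_le_of_ne (by linarith) hc
      · left; exact sub_self _
      · by_cases hc2 : x 3 = x 1
        · by_cases hc6 : x 1 + x 4 = 1
          · left; rw [if_pos hc2, if_pos ⟨hc2, hc6⟩]; ring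
          · right; exact lt_of_le_of_ne (by linarith) hc6
        · left; rw [if_neg hc2, if_neg (fun hh => hc2 hh.1)]; ring
    · -- S-II-B : R1 tight, J < s
      have hJlt : x 5 < x 3 := lt_of_le_of_ne g2 e1
      by_cases e4' : x 3 = x 1 ∧ x 1 + x 4 = 1
      · by_cases e5c : x 4 = x 2
        · exact absurd (by linarith : x 5 = x 3) e1
        · refine not_extreme_strong x hxP
            (if x 0 + x 3 = 1 then 1 else 0) (-1) 0 (-1) 1 0
            ?_ ?_ ?_ ?_ ?_ ?_ ?_ ?_ ?_ ?_ ?_ ?_ ?_ ?_ ?_ ?_ ?_ ?_ ?_ hx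
          · constructor <;> split_ifs <;> norm_num
          · norm_num
          · norm_num
          · norm_num
          · norm_num
          · norm_num
          · exact Or.inr (Or.inl (by norm_num))
          · intro h
            by_cases hc : x 0 + x 3 = 1
            · constructor <;> linarith
            · rw [if_neg hc] at h; exact absurd rfl h
          · intro _; constructor <;> [linarith [e4'.1]; linarith [e4'.1]]
          · intro h; exact absurd rfl h
          · intro _; exact ⟨h30, h31⟩
          · intro _
            obtain ⟨hca, hcb⟩ := e4'; constructor <;> linarith
          · intro h; exact absurd rfl h
          · left; norm_num
          · right; exact hJlt
          · left; norm_num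
          · by_cases hc : x 0 + x 3 = 1
            · left; rw [if_pos hc]; ring
            · right; exact lt_of_le_of_ne (by linarith) hc
          · right; exact lt_of_le_of_ne g5 e5c
          · left; norm_num
      · by_cases hJ0 : 0 < x 5
        · refine not_extreme_strong x hxP
            (if x 0 + x 3 = 1 then 1 else 0)
            (if x 3 = x 1 then -1 else 0) 0 (-1) 0 (-1)
            ?_ ?_ ?_ ?_ ?_ ?_ ?_ ?_ ?_ ?_ ?_ ?_ ?_ ?_ ?_ ?_ ?_ ?_ ?_ hx
          · constructor <;> split_ifs <;> norm_num
          · constructor <;> split_ifs <;> norm_num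
          · norm_num
          · norm_num
          · norm_num
          · norm_num
          · exact Or.inr (Or.inr (Or.inr (Or.inl (by norm_num))))
          · intro h
            by_cases hc : x 0 + x 3 = 1
            · constructor <;> linarith
            · rw [if_neg hc] at h; exact absurd rfl h
          · intro h
            by_cases hc : x 3 = x 1
            · constructor <;> linarith
            · rw [if_neg hc] at h; exact absurd rfl h
          · intro h; exact absurd rfl h
          · intro _; exact ⟨h30, h31⟩
          · intro h; exact absurd rfl h
          · intro _; exact ⟨hJ0, by linarith⟩
          · left; norm_num
          · left; norm_num
          · by_cases hc : x 3 = x 1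
            · left; rw [if_pos hc]; ring
            · right; exact lt_of_le_of_ne g3 hc
          · by_cases hc : x 0 + x 3 = 1
            · left; rw [if_pos hc]; ring
            · right; exact lt_of_le_of_ne (by linarith) hc
          · left; norm_num
          · by_cases hc2 : x 3 = x 1
            · right
              exact lt_of_le_of_ne (by linarith) (fun hh => e4' ⟨hc2, hh⟩)
            · left; rw [if_neg hc2]; norm_num
        · have hJ00 : x 5 = 0 := le_antisymm (not_lt.mp hJ0) (B 5).1
          by_cases hc1lt : x 2 < 1
          · refine not_extreme_strong x hxP
              (if x 0 + x 3 = 1 then 1 else 0)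
              (if x 3 = x 1 then -1 else 0) (-1) (-1) 0 0
              ?_ ?_ ?_ ?_ ?_ ?_ ?_ ?_ ?_ ?_ ?_ ?_ ?_ ?_ ?_ ?_ ?_ ?_ ?_ hx
            · constructor <;> split_ifs <;> norm_num
            · constructor <;> split_ifs <;> norm_num
            · norm_num
            · norm_num
            · norm_num
            · norm_num
            · exact Or.inr (Or.inr (Or.inr (Or.inl (by norm_num))))
            · intro h
              by_cases hc : x 0 + x 3 = 1
              · constructor <;> linarith
              · rw [if_neg hc] at h; exact absurd rfl h
            · intro h
              by_cases hc : x 3 = x 1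
              · constructor <;> linarith
              · rw [if_neg hc] at h; exact absurd rfl h
            · intro _; exact ⟨by linarith [(B 4).1], hc1lt⟩
            · intro _; exact ⟨h30, h31⟩
            · intro h; exact absurd rfl h
            · intro h; exact absurd rfl h
            · left; norm_num
            · right; linarith
            · by_cases hc : x 3 = x 1
              · left; rw [if_pos hc]; ring
              · right; exact lt_of_le_of_ne g3 hc
            · by_cases hc : x 0 + x 3 = 1
              · left; rw [if_pos hc]; ring
              · right; exact lt_of_le_of_ne (by linarith) hc
            · right; linarith
            · by_cases hc2 : x 3 = x 1
              · right
                exact lt_of_le_of_ne (by linarith) (fun hh => e4' ⟨hc2, hh⟩)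
              · left; rw [if_neg hc2]; norm_num
          · have hc1 : x 2 = 1 := le_antisymm (B 2).2 (not_lt.mp hc1lt)
            exact e4' ⟨by linarith, by linarith⟩
  · -- S-I : R1 strict
    refine not_extreme_strong x hxP
      (if x 0 + x 3 = 1 then 1 else 0)
      (if x 3 = x 1 then -1 else 0)
      (if x 3 = x 1 ∧ x 1 + x 4 = 1 ∧ x 4 = x 2 then 1 else 0)
      (-1)
      (if x 3 = x 1 ∧ x 1 + x 4 = 1 then 1 else 0)
      (if x 5 = x 3 then -1 else 0)
      ?_ ?_ ?_ ?_ ?_ ?_ ?_ ?_ ?_ ?_ ?_ ?_ ?_ ?_ ?_ ?_ ?_ ?_ ?_ hx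
    · constructor <;> split_ifs <;> norm_num
    · constructor <;> split_ifs <;> norm_num
    · constructor <;> split_ifs <;> norm_num
    · norm_num
    · constructor <;> split_ifs <;> norm_num
    · constructor <;> split_ifs <;> norm_num
    · exact Or.inr (Or.inr (Or.inr (Or.inl (by norm_num))))
    · intro h
      by_cases hc : x 0 + x 3 = 1
      · constructor <;> linarith
      · rw [if_neg hc] at h; exact absurd rfl h
    · intro h
      by_cases hc : x 3 = x 1
      · constructor <;> linarith
      · rw [if_neg hc] at h; exact absurd rfl h
    · intro h
      by_cases hc : x 3 = x 1 ∧ x 1 + x 4 = 1 ∧ x 4 = x 2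
      · obtain ⟨hca, hcb, hcc⟩ := hc; constructor <;> linarith
      · rw [if_neg hc] at h; exact absurd rfl h
    · intro _; exact ⟨h30, h31⟩
    · intro h
      by_cases hc : x 3 = x 1 ∧ x 1 + x 4 = 1
      · obtain ⟨hca, hcb⟩ := hc; constructor <;> linarith
      · rw [if_neg hc] at h; exact absurd rfl h
    · intro h
      by_cases hc : x 5 = x 3
      · constructor <;> linarith
      · rw [if_neg hc] at h; exact absurd rfl h
    · right; exact lt_of_le_of_ne (by linarith) r
    · by_cases hc : x 5 = x 3
      · left; rw [if_pos hc]; ring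
      · right; exact lt_of_le_of_ne g2 hc
    · by_cases hc : x 3 = x 1
      · left; rw [if_pos hc]; ring
      · right; exact lt_of_le_of_ne g3 hc
    · by_cases hc : x 0 + x 3 = 1
      · left; rw [if_pos hc]; ring
      · right; exact lt_of_le_of_ne (by linarith) hc
    · by_cases hc45 : x 3 = x 1 ∧ x 1 + x 4 = 1
      · by_cases hc5 : x 4 = x 2
        · left; rw [if_pos hc45, if_pos ⟨hc45.1, hc45.2, hc5⟩]; ring
        · right; exact lt_of_le_of_ne g5 hc5
      · left; rw [if_neg hc45, if_neg (fun hh => hc45 ⟨hh.1, hh.2.1⟩)]; ring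
    · by_cases hc2 : x 3 = x 1
      · by_cases hc6 : x 1 + x 4 = 1
        · left; rw [if_pos hc2, if_pos ⟨hc2, hc6⟩]; ring
        · right; exact lt_of_le_of_ne (by linarith) hc6
      · left; rw [if_neg hc2, if_neg (fun hh => hc2 hh.1)]; ring
open Classical in
lemma c_int (x : Fin 6 → ℝ) (hx : x ∈ Set.extremePoints ℝ polytopeBT)
    (hs : x 3 = 0 ∨ x 3 = 1) : x 2 = 0 ∨ x 2 = 1 := by
  by_contra hne
  push_neg at hne
  obtain ⟨hne0, hne1⟩ := hne
  have hxP := hx.1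
  obtain ⟨B, g1, g2, g3, g4, g5, g6⟩ := hx.1
  have h20 : 0 < x 2 := lt_of_le_of_ne (B 2).1 (Ne.symm hne0)
  have h21 : x 2 < 1 := lt_of_le_of_ne (B 2).2 hne1
  by_cases e5 : x 4 = x 2
  · refine not_extreme_strong x hxP 0 (if x 1 + x 4 = 1 then -1 else 0) 1 0 1 0
      ?_ ?_ ?_ ?_ ?_ ?_ ?_ ?_ ?_ ?_ ?_ ?_ ?_ ?_ ?_ ?_ ?_ ?_ ?_ hx
    · norm_num
    · constructor <;> split_ifs <;> norm_num
    · norm_num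
    · norm_num
    · norm_num
    · norm_num
    · exact Or.inr (Or.inr (Or.inl (by norm_num)))
    · intro h; exact absurd rfl h
    · intro h
      by_cases hc : x 1 + x 4 = 1
      · constructor <;> linarith
      · rw [if_neg hc] at h; exact absurd rfl h
    · intro _; exact ⟨h20, h21⟩
    · intro h; exact absurd rfl h
    · intro _; constructor <;> linarith
    · intro h; exact absurd rfl h
    · left; norm_num
    · left; norm_num
    · by_cases hc : x 1 + x 4 = 1
      · right; rcases hs with h | h <;> linarith
      · left; rw [if_neg hc]; norm_num
    · left; norm_num
    · left; norm_num
    · by_cases hc : x 1 + x 4 = 1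
      · left; rw [if_pos hc]; norm_num
      · right; exact lt_of_le_of_ne (by linarith) hc
  · have h42 : x 4 < x 2 := lt_of_le_of_ne g5 e5
    by_cases r : x 3 + x 4 - x 2 = x 5
    · by_cases hJ0 : 0 < x 5
      · refine not_extreme_strong x hxP 0 0 1 0 0 (-1)
          ?_ ?_ ?_ ?_ ?_ ?_ ?_ ?_ ?_ ?_ ?_ ?_ ?_ ?_ ?_ ?_ ?_ ?_ ?_ hx
        · norm_num
        · norm_num
        · norm_num
        · norm_num
        · norm_num
        · norm_num
        · exact Or.inr (Or.inr (Or.inl (by norm_num)))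
        · intro h; exact absurd rfl h
        · intro h; exact absurd rfl h
        · intro _; exact ⟨h20, h21⟩
        · intro h; exact absurd rfl h
        · intro h; exact absurd rfl h
        · intro _; exact ⟨hJ0, by linarith⟩
        · left; norm_num
        · right; linarith
        · left; norm_num
        · left; norm_num
        · right; exact h42
        · left; norm_num
      · have hJ00 : x 5 = 0 := le_antisymm (not_lt.mp hJ0) (B 5).1
        rcases hs with h | h <;> linarith [(B 4).1]
    · refine not_extreme_strong x hxP 0 0 1 0 0 0
        ?_ ?_ ?_ ?_ ?_ ?_ ?_ ?_ ?_ ?_ ?_ ?_ ?_ ?_ ?_ ?_ ?_ ?_ ?_ hx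
      · norm_num
      · norm_num
      · norm_num
      · norm_num
      · norm_num
      · norm_num
      · exact Or.inr (Or.inr (Or.inl (by norm_num)))
      · intro h; exact absurd rfl h
      · intro h; exact absurd rfl h
      · intro _; exact ⟨h20, h21⟩
      · intro h; exact absurd rfl h
      · intro h; exact absurd rfl h
      · intro h; exact absurd rfl h
      · right; exact lt_of_le_of_ne (by linarith) r
      · left; norm_num
      · left; norm_num
      · left; norm_num
      · right; exact h42
      · left; norm_num

open Classical in
lemma t_int (x : Fin 6 → ℝ) (hx : x ∈ Set.extremePoints ℝ polytopeBT)
    (hs : x 3 = 0 ∨ x 3 = 1) (hc : x 2 = 0 ∨ x 2 = 1) : x 4 = 0 ∨ x 4 = 1 := by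
  by_contra hne
  push_neg at hne
  obtain ⟨hne0, hne1⟩ := hne
  have hxP := hx.1
  obtain ⟨B, g1, g2, g3, g4, g5, g6⟩ := hx.1
  have h40 : 0 < x 4 := lt_of_le_of_ne (B 4).1 (Ne.symm hne0)
  have h41 : x 4 < 1 := lt_of_le_of_ne (B 4).2 hne1
  have h42 : x 4 < x 2 := by rcases hc with h | h <;> linarith
  refine not_extreme_strong x hxP 0 (if x 1 + x 4 = 1 then -1 else 0) 0 0 1
    (if x 3 + x 4 - x 2 = x 5 then 1 else 0)
    ?_ ?_ ?_ ?_ ?_ ?_ ?_ ?_ ?_ ?_ ?_ ?_ ?_ ?_ ?_ ?_ ?_ ?_ ?_ hx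
  · norm_num
  · constructor <;> split_ifs <;> norm_num
  · norm_num
  · norm_num
  · norm_num
  · constructor <;> split_ifs <;> norm_num
  · exact Or.inr (Or.inr (Or.inr (Or.inr (Or.inl (by norm_num)))))
  · intro h; exact absurd rfl h
  · intro h
    by_cases hcc : x 1 + x 4 = 1
    · constructor <;> linarith
    · rw [if_neg hcc] at h; exact absurd rfl h
  · intro h; exact absurd rfl h
  · intro h; exact absurd rfl h
  · intro _; exact ⟨h40, h41⟩
  · intro h
    by_cases hr : x 3 + x 4 - x 2 = x 5
    · rcases hs with h' | h' <;> rcases hc with h'' | h'' <;>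
        exact ⟨by linarith [(B 5).1], by linarith [(B 5).1]⟩
    · rw [if_neg hr] at h; exact absurd rfl h
  · by_cases hr : x 3 + x 4 - x 2 = x 5
    · left; rw [if_pos hr]; norm_num
    · right; exact lt_of_le_of_ne (by linarith) hr
  · by_cases hr : x 3 + x 4 - x 2 = x 5
    · right; linarith
    · left; rw [if_neg hr]; norm_num
  · by_cases hcc : x 1 + x 4 = 1
    · right; rcases hs with h | h <;> linarith
    · left; rw [if_neg hcc]; norm_num
  · left; norm_num
  · right; exact h42
  · by_cases hcc : x 1 + x 4 = 1
    · left; rw [if_pos hcc]; norm_num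
    · right; exact lt_of_le_of_ne (by linarith) hcc

open Classical in
lemma J_int (x : Fin 6 → ℝ) (hx : x ∈ Set.extremePoints ℝ polytopeBT)
    (hs : x 3 = 0 ∨ x 3 = 1) (hc : x 2 = 0 ∨ x 2 = 1) (ht : x 4 = 0 ∨ x 4 = 1) :
    x 5 = 0 ∨ x 5 = 1 := by
  by_contra hne
  push_neg at hne
  obtain ⟨hne0, hne1⟩ := hne
  have hxP := hx.1
  obtain ⟨B, g1, g2, g3, g4, g5, g6⟩ := hx.1
  have h50 : 0 < x 5 := lt_of_le_of_ne (B 5).1 (Ne.symm hne0)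
  have h51 : x 5 < 1 := lt_of_le_of_ne (B 5).2 hne1
  refine not_extreme_strong x hxP 0 0 0 0 0 1
    ?_ ?_ ?_ ?_ ?_ ?_ ?_ ?_ ?_ ?_ ?_ ?_ ?_ ?_ ?_ ?_ ?_ ?_ ?_ hx
  · norm_num
  · norm_num
  · norm_num
  · norm_num
  · norm_num
  · norm_num
  · exact Or.inr (Or.inr (Or.inr (Or.inr (Or.inr (by norm_num)))))
  · intro h; exact absurd rfl h
  · intro h; exact absurd rfl h
  · intro h; exact absurd rfl h
  · intro h; exact absurd rfl h
  · intro h; exact absurd rfl h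
  · intro _; exact ⟨h50, h51⟩
  · right
    refine lt_of_le_of_ne (by linarith) (fun hh => ?_)
    rcases hs with h | h <;> rcases hc with h' | h' <;> rcases ht with h'' | h'' <;> linarith
  · right
    refine lt_of_le_of_ne g2 (fun hh => ?_)
    rcases hs with h | h <;> linarith
  · left; norm_num
  · left; norm_num
  · left; norm_num
  · left; norm_num

open Classical in
lemma a_int (x : Fin 6 → ℝ) (hx : x ∈ Set.extremePoints ℝ polytopeBT)
    (hs : x 3 = 0 ∨ x 3 = 1) : x 0 = 0 ∨ x 0 = 1 := by
  by_contra hne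
  push_neg at hne
  obtain ⟨hne0, hne1⟩ := hne
  have hxP := hx.1
  obtain ⟨B, g1, g2, g3, g4, g5, g6⟩ := hx.1
  have h00 : 0 < x 0 := lt_of_le_of_ne (B 0).1 (Ne.symm hne0)
  have h01 : x 0 < 1 := lt_of_le_of_ne (B 0).2 hne1
  refine not_extreme_strong x hxP 1 0 0 0 0 0
    ?_ ?_ ?_ ?_ ?_ ?_ ?_ ?_ ?_ ?_ ?_ ?_ ?_ ?_ ?_ ?_ ?_ ?_ ?_ hx
  · norm_num
  · norm_num
  · norm_num
  · norm_num
  · norm_num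
  · norm_num
  · exact Or.inl (by norm_num)
  · intro _; exact ⟨h00, h01⟩
  · intro h; exact absurd rfl h
  · intro h; exact absurd rfl h
  · intro h; exact absurd rfl h
  · intro h; exact absurd rfl h
  · intro h; exact absurd rfl h
  · left; norm_num
  · left; norm_num
  · left; norm_num
  · right; rcases hs with h | h <;> linarith
  · left; norm_num
  · left; norm_num

open Classical in
lemma b_int (x : Fin 6 → ℝ) (hx : x ∈ Set.extremePoints ℝ polytopeBT)
    (hs : x 3 = 0 ∨ x 3 = 1) (ht : x 4 = 0 ∨ x 4 = 1) : x 1 = 0 ∨ x 1 = 1 := by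
  by_contra hne
  push_neg at hne
  obtain ⟨hne0, hne1⟩ := hne
  have hxP := hx.1
  obtain ⟨B, g1, g2, g3, g4, g5, g6⟩ := hx.1
  have h10 : 0 < x 1 := lt_of_le_of_ne (B 1).1 (Ne.symm hne0)
  have h11 : x 1 < 1 := lt_of_le_of_ne (B 1).2 hne1
  refine not_extreme_strong x hxP 0 1 0 0 0 0
    ?_ ?_ ?_ ?_ ?_ ?_ ?_ ?_ ?_ ?_ ?_ ?_ ?_ ?_ ?_ ?_ ?_ ?_ ?_ hx
  · norm_num
  · norm_num
  · norm_num
  · norm_num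
  · norm_num
  · norm_num
  · exact Or.inr (Or.inl (by norm_num))
  · intro h; exact absurd rfl h
  · intro _; exact ⟨h10, h11⟩
  · intro h; exact absurd rfl h
  · intro h; exact absurd rfl h
  · intro h; exact absurd rfl h
  · intro h; exact absurd rfl h
  · left; norm_num
  · left; norm_num
  · right; rcases hs with h | h <;> linarith
  · left; norm_num
  · left; norm_num
  · right; rcases ht with h | h <;> linarith

/-- Every vertex (extreme point) of the polytope `B^T` has all
coordinates in {0,1}, i.e. `B^T` is an integral polytope. -/
theorem polytopeBT_integral :
    ∀ x ∈ Set.extremePoints ℝ polytopeBT, ∀ i : Fin 6, x i = 0 ∨ x i = 1 := by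
  intro x hx i
  have hs := s_int x hx
  have hc := c_int x hx hs
  have ht := t_int x hx hs hc
  fin_cases i
  · exact a_int x hx hs
  · exact b_int x hx hs ht
  · exact hc
  · exact hs
  · exact ht
  · exact J_int x hx hs hc ht
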